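/- The map θ : S → Π_g, sending each p ∈ S to its unique itinerary sequence, is a homeomorphism of S onto Π_g. -/

import Mathlib

/-- The inverse limit Π_g of a map g : T → T: sequences (t_0, t_1, …) in T
with g(t_{i+1}) = t_i for all i, topologized as a subspace of the product T^ℕ. -/
abbrev InvLim {T : Type*} (g : T → T) : Type _ :=
  {t : ℕ → T // ∀ i : ℕ, g (t (i + 1)) = t i}

/-- the itinerary map θ : S → Π_g is a homeomorphism of S onto Π_g. -/
theorem stmt3 {T N : Type*} [MetricSpace T] [CompactSpace T] [Nonempty T]
    [MetricSpace N] [CompactSpace N] [Nonempty N]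
    (g : T → T) (hgc : Continuous g) (hgs : Function.Surjective g)
    (hgcov : IsCoveringMap g)
    (F : T × N → T × N) (hFc : Continuous F) (hFi : Function.Injective F)
    (hfib : ∀ p : T × N, (F p).1 = g p.1)
    (C lam : ℝ) (hC : 0 < C) (hlam0 : 0 < lam) (hlam1 : lam < 1)
    (hcontr : ∀ (t : T) (n : ℕ),
      Metric.diam (F^[n] '' ({t} ×ˢ (Set.univ : Set N))) ≤ C * lam ^ n)
    (S : Set (T × N)) (hS : S = ⋂ l : ℕ, F^[l] '' Set.univ)
    (θ : S → InvLim g)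
    (hθ : ∀ (p : S) (i : ℕ),
      (p : T × N) ∈ F^[i] '' ({(θ p).1 i} ×ˢ (Set.univ : Set N))) :
    ∃ e : S ≃ₜ InvLim g, ∀ p : S, e p = θ p := by
  have hFin : ∀ i : ℕ, Function.Injective (F^[i]) := fun i => hFi.iterate i
  have hFcn : ∀ i : ℕ, Continuous (F^[i]) := fun i => hFc.iterate i
  -- S is closed, hence compact
  have hScl : IsClosed S := by
    rw [hS]
    exact isClosed_iInter fun l => (isCompact_univ.image (hFcn l)).isClosed
  haveI : CompactSpace S := isCompact_iff_compactSpace.mp hScl.isCompact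
  -- injectivity of θ
  have hinj : Function.Injective θ := by
    intro p q hpq
    have hd : ∀ i : ℕ, dist (p : T × N) (q : T × N) ≤ C * lam ^ i := by
      intro i
      have hb : Bornology.IsBounded (F^[i] '' ({(θ p).1 i} ×ˢ (Set.univ : Set N))) :=
        ((isCompact_singleton.prod isCompact_univ).image (hFcn i)).isBounded
      have hq := hθ q i
      rw [← hpq] at hq
      exact le_trans (Metric.dist_le_diam_of_mem hb (hθ p i) hq) (hcontr _ i)
    have hlim : Filter.Tendsto (fun i : ℕ => C * lam ^ i) Filter.atTop (nhds 0) := by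
      simpa using (tendsto_pow_atTop_nhds_zero_of_lt_one hlam0.le hlam1).const_mul C
    have hle : dist (p : T × N) (q : T × N) ≤ 0 := ge_of_tendsto' hlim hd
    exact Subtype.ext (by rwa [← dist_le_zero])
  -- surjectivity of θ
  have hsurj : Function.Surjective θ := by
    intro t
    set A : ℕ → Set (T × N) := fun i => F^[i] '' ({t.1 i} ×ˢ (Set.univ : Set N)) with hA
    have hAc : ∀ i, IsCompact (A i) := fun i =>
      (isCompact_singleton.prod isCompact_univ).image (hFcn i)
    have hAne : ∀ i, (A i).Nonempty := fun i =>
      ((Set.singleton_nonempty _).prod Set.univ_nonempty).image _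
    have hAsub : ∀ i, A (i + 1) ⊆ A i := by
      intro i p hp
      obtain ⟨x, hx, rfl⟩ := hp
      rw [Function.iterate_succ_apply]
      refine ⟨F x, ?_, rfl⟩
      rw [Set.mem_prod]
      refine ⟨?_, Set.mem_univ _⟩
      have hx1 : x.1 = t.1 (i + 1) := (Set.mem_prod.mp hx).1
      simp only [Set.mem_singleton_iff, hfib, hx1, t.2 i]
    have hne : (⋂ i, A i).Nonempty :=
      IsCompact.nonempty_iInter_of_sequence_nonempty_isCompact_isClosed A hAsub hAne
        (hAc 0) (fun i => (hAc i).isClosed)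
    obtain ⟨p, hp⟩ := hne
    have hpS : p ∈ S := by
      rw [hS, Set.mem_iInter]
      intro l
      exact Set.image_mono (Set.subset_univ _) (Set.mem_iInter.mp hp l)
    refine ⟨⟨p, hpS⟩, ?_⟩
    refine Subtype.ext (funext fun i => ?_)
    obtain ⟨y, hy, hyp⟩ := hθ ⟨p, hpS⟩ i
    obtain ⟨x, hx, hxp⟩ := Set.mem_iInter.mp hp i
    have hxy : x = y := hFin i (hxp.trans hyp.symm)
    have h1 : y.1 = (θ ⟨p, hpS⟩).1 i := (Set.mem_prod.mp hy).1
    have h2 : x.1 = t.1 i := (Set.mem_prod.mp hx).1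
    rw [← h1, ← hxy, h2]
  -- continuity of θ
  have hcont : Continuous θ := by
    rw [continuous_induced_rng]
    refine continuous_pi fun i => ?_
    set ψ : S → T × N := fun p => (hθ p i).choose with hψdef
    have hψmem : ∀ p : S, ψ p ∈ ({(θ p).1 i} ×ˢ (Set.univ : Set N)) :=
      fun p => (hθ p i).choose_spec.1
    have hψeq : ∀ p : S, F^[i] (ψ p) = (p : T × N) := fun p => (hθ p i).choose_spec.2
    have hemb : Topology.IsEmbedding (F^[i]) := ((hFcn i).isClosedEmbedding (hFin i)).toIsEmbedding
    have hψc : Continuous ψ := by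
      rw [hemb.continuous_iff]
      have : (F^[i]) ∘ ψ = fun p : S => (p : T × N) := funext hψeq
      rw [this]
      exact continuous_subtype_val
    have : (fun p : S => (θ p).1 i) = fun p : S => (ψ p).1 := by
      funext p
      exact ((Set.mem_prod.mp (hψmem p)).1).symm
    rw [Function.comp_def]
    simp only [this]
    exact continuous_fst.comp hψc
  let e : S ≃ InvLim g := Equiv.ofBijective θ ⟨hinj, hsurj⟩
  exact ⟨hcont.homeoOfEquivCompactToT2 (f := e), fun p => rfl⟩
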